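/- Let a > 0, α ∈ (0,1) and β ∈ ℝ. Then there exist constants c, C > 0 such that for every t ∈ (0,a]: c · t^{1−α} ℓ_a(t)^{−β} ≤ ∫_0^t s^{−α} ℓ_a(s)^{−β} ds ≤ C · t^{1−α} ℓ_a(t)^{−β}. -/

import Mathlib

open MeasureTheory Set Real

private lemma aux_one_add_rpow_le {b ε u : ℝ} (hb : 0 ≤ b) (hε : 0 < ε) (hu : 0 ≤ u) :
    (1 + u) ^ b ≤ (1 + b / ε) ^ b * Real.exp (ε * u) := by
  rcases eq_or_lt_of_le hb with rfl | hb'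
  · simp only [Real.rpow_zero, one_mul]
    exact Real.one_le_exp (by positivity)
  · have hδ : 0 < ε / b := by positivity
    have key : 1 + u ≤ (1 + b / ε) * Real.exp ((ε / b) * u) := by
      have h1 : (ε / b) * u + 1 ≤ Real.exp ((ε / b) * u) := Real.add_one_le_exp _
      have h2 : (1 + b / ε) * ((ε / b) * u + 1) ≤ (1 + b / ε) * Real.exp ((ε / b) * u) := by
        apply mul_le_mul_of_nonneg_left h1 (by positivity)
      refine le_trans ?_ h2
      have hbε : (b / ε) * ((ε / b) * u) = u := by
        rw [show (b / ε) * ((ε / b) * u) = (b / ε) * (ε / b) * u by ring,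
          div_mul_div_comm, mul_comm ε b, div_self (by positivity), one_mul]
      nlinarith [mul_nonneg hδ.le hu, div_pos hb' hε]
    calc (1 + u) ^ b ≤ ((1 + b / ε) * Real.exp ((ε / b) * u)) ^ b :=
          Real.rpow_le_rpow (by linarith) key hb
      _ = (1 + b / ε) ^ b * (Real.exp ((ε / b) * u)) ^ b :=
          Real.mul_rpow (by positivity) (Real.exp_pos _).le
      _ = (1 + b / ε) ^ b * Real.exp (ε * u) := by
          rw [Real.rpow_def_of_pos (Real.exp_pos _), Real.log_exp]
          have hbb : ε / b * u * b = ε * u := by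
            rw [mul_right_comm, div_mul_cancel₀ _ (ne_of_gt hb')]
          rw [hbb]

/-- For `a > 0`, `α ∈ (0,1)`, `β ∈ ℝ`, with `ℓ_a(s) = log(e a / s)`,
one has `∫_0^t s^{−α} ℓ_a(s)^{−β} ds ≈ t^{1−α} ℓ_a(t)^{−β}` on `(0,a]`,
with constants independent of `t`. -/
theorem stmt_8 (a α β : ℝ) (ha : 0 < a) (hα0 : 0 < α) (hα1 : α < 1) :
    ∃ c C : ℝ, 0 < c ∧ 0 < C ∧ ∀ t ∈ Ioc (0 : ℝ) a,
      c * (t ^ (1 - α) * Real.log (Real.exp 1 * a / t) ^ (-β)) ≤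
        (∫ s in Ioo (0 : ℝ) t, s ^ (-α) * Real.log (Real.exp 1 * a / s) ^ (-β)) ∧
      (∫ s in Ioo (0 : ℝ) t, s ^ (-α) * Real.log (Real.exp 1 * a / s) ^ (-β)) ≤
        C * (t ^ (1 - α) * Real.log (Real.exp 1 * a / t) ^ (-β)) := by
  have hε : (0:ℝ) < (1 - α) / 2 := by linarith
  set ε : ℝ := (1 - α) / 2 with hεdef
  set K : ℝ := (1 + |β| / ε) ^ |β| with hKdef
  have hK0 : 0 < K := Real.rpow_pos_of_pos (by positivity) _
  set L : ℝ → ℝ := fun s => Real.log (Real.exp 1 * a / s) with hLdef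
  -- L s ≥ 1 on (0, a]
  have hL1 : ∀ s : ℝ, 0 < s → s ≤ a → 1 ≤ L s := by
    intro s hs hsa
    have h1 : Real.exp 1 ≤ Real.exp 1 * a / s := by
      rw [le_div_iff₀ hs]
      nlinarith [Real.exp_pos 1]
    calc (1:ℝ) = Real.log (Real.exp 1) := (Real.log_exp 1).symm
      _ ≤ L s := Real.log_le_log (Real.exp_pos 1) h1
  -- additivity of L
  have hLadd : ∀ s t : ℝ, 0 < s → 0 < t → L s = L t + Real.log (t / s) := by
    intro s t hs ht
    have : Real.exp 1 * a / s = (Real.exp 1 * a / t) * (t / s) := by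
      field_simp
    rw [hLdef]
    simp only
    rw [this, Real.log_mul (by positivity) (by positivity)]
  refine ⟨(1/2) * (2:ℝ) ^ (-|β|), K / ε, by positivity, by positivity, ?_⟩
  intro t ht
  obtain ⟨ht0, hta⟩ := ht
  have hLt1 : 1 ≤ L t := hL1 t ht0 hta
  have hLtpos : 0 < L t := lt_of_lt_of_le one_pos hLt1
  have hLtb : 0 < L t ^ (-β) := Real.rpow_pos_of_pos hLtpos _
  -- pointwise upper bound
  have hupper : ∀ s ∈ Ioo (0:ℝ) t, s ^ (-α) * L s ^ (-β) ≤
      (K * L t ^ (-β) * t ^ ε) * s ^ (-(α + ε)) := by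
    intro s hs
    obtain ⟨hs0, hst⟩ := hs
    have hsa : s ≤ a := le_trans hst.le hta
    have hLs1 : 1 ≤ L s := hL1 s hs0 hsa
    have hLspos : 0 < L s := lt_of_lt_of_le one_pos hLs1
    set u : ℝ := Real.log (t / s) with hudef
    have hu0 : 0 ≤ u := Real.log_nonneg (by rw [le_div_iff₀ hs0]; linarith)
    have hLsu : L s = L t + u := hLadd s t hs0 ht0
    have hratio : L s / L t ≤ 1 + u := by
      rw [hLsu, add_div, div_self hLtpos.ne']
      have : u / L t ≤ u := div_le_self hu0 hLt1
      linarith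
    have hratio1 : 1 ≤ L s / L t := by
      rw [le_div_iff₀ hLtpos, one_mul, hLsu]; linarith
    -- step 1 : L s ^ (-β) ≤ L t ^ (-β) * (1+u)^|β|
    have step1 : L s ^ (-β) ≤ L t ^ (-β) * (1 + u) ^ |β| := by
      have e1 : L s ^ (-β) = L t ^ (-β) * (L s / L t) ^ (-β) := by
        rw [Real.div_rpow hLspos.le hLtpos.le, mul_div_cancel₀ _ hLtb.ne']
      rw [e1]
      apply mul_le_mul_of_nonneg_left _ hLtb.le
      calc (L s / L t) ^ (-β) ≤ (L s / L t) ^ |β| :=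
            Real.rpow_le_rpow_of_exponent_le hratio1 (neg_le_abs β)
        _ ≤ (1 + u) ^ |β| := Real.rpow_le_rpow (by linarith) hratio (abs_nonneg β)
    -- step 2 : (1+u)^|β| ≤ K * (t/s)^ε
    have step2 : (1 + u) ^ |β| ≤ K * (t / s) ^ ε := by
      have h2 := aux_one_add_rpow_le (abs_nonneg β) hε hu0
      have hts : (t / s : ℝ) ^ ε = Real.exp (ε * u) := by
        rw [Real.rpow_def_of_pos (by positivity), hudef, mul_comm]
      rw [hts]
      exact h2
    have hts2 : (t / s : ℝ) ^ ε = t ^ ε * s ^ (-ε) := by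
      rw [Real.div_rpow ht0.le hs0.le, Real.rpow_neg hs0.le, div_eq_mul_inv]
    have hsplit : s ^ (-(α + ε)) = s ^ (-α) * s ^ (-ε) := by
      rw [← Real.rpow_add hs0]; ring_nf
    calc s ^ (-α) * L s ^ (-β)
        ≤ s ^ (-α) * (L t ^ (-β) * (K * (t ^ ε * s ^ (-ε)))) := by
          apply mul_le_mul_of_nonneg_left _ (Real.rpow_pos_of_pos hs0 _).le
          calc L s ^ (-β) ≤ L t ^ (-β) * (1 + u) ^ |β| := step1
            _ ≤ L t ^ (-β) * (K * (t / s) ^ ε) :=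
                mul_le_mul_of_nonneg_left step2 hLtb.le
            _ = L t ^ (-β) * (K * (t ^ ε * s ^ (-ε))) := by rw [hts2]
      _ = (K * L t ^ (-β) * t ^ ε) * s ^ (-(α + ε)) := by rw [hsplit]; ring
  -- measurability via continuity on the open interval
  have hcont : ContinuousOn (fun s : ℝ => s ^ (-α) * L s ^ (-β)) (Ioo 0 t) := by
    apply ContinuousOn.mul
    · exact ContinuousOn.rpow_const continuousOn_id (fun x hx => Or.inl (ne_of_gt hx.1))
    · apply ContinuousOn.rpow_const
      · apply ContinuousOn.log
        · exact continuousOn_const.div continuousOn_id (fun x hx => ne_of_gt hx.1)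
        · intro x hx
          have := hx.1
          positivity
      · intro x hx
        exact Or.inl (ne_of_gt (lt_of_lt_of_le one_pos
          (hL1 x hx.1 (le_trans hx.2.le hta))))
  -- integrability of dominating function
  have hαε1 : -(1:ℝ) < -(α + ε) := by simp only [hεdef]; linarith
  have hdom : IntegrableOn (fun s : ℝ => s ^ (-(α + ε))) (Ioo 0 t) := by
    have := intervalIntegral.intervalIntegrable_rpow' (a := 0) (b := t) hαε1
    exact (intervalIntegrable_iff_integrableOn_Ioo_of_le ht0.le).mp this
  have hdomC : IntegrableOn (fun s : ℝ => (K * L t ^ (-β) * t ^ ε) * s ^ (-(α + ε)))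
      (Ioo 0 t) := hdom.const_mul _
  -- integrability of g
  have hgint : IntegrableOn (fun s : ℝ => s ^ (-α) * L s ^ (-β)) (Ioo 0 t) := by
    apply Integrable.mono' hdomC (hcont.aestronglyMeasurable measurableSet_Ioo)
    rw [ae_restrict_iff' measurableSet_Ioo]
    filter_upwards with s hs
    have hs0 := hs.1
    have hLspos : 0 < L s := lt_of_lt_of_le one_pos (hL1 s hs0 (le_trans hs.2.le hta))
    rw [Real.norm_eq_abs, abs_of_nonneg (by positivity)]
    exact hupper s hs
  -- nonnegativity of g on (0,t)
  have hgnn : ∀ s ∈ Ioo (0:ℝ) t, 0 ≤ s ^ (-α) * L s ^ (-β) := by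
    intro s hs
    have hLspos : 0 < L s := lt_of_lt_of_le one_pos (hL1 s hs.1 (le_trans hs.2.le hta))
    have := hs.1
    positivity
  constructor
  · -- LOWER BOUND
    have hhalf0 : 0 < t / 2 := by linarith
    have hsub : Ioo (t/2) t ⊆ Ioo (0:ℝ) t := Ioo_subset_Ioo (by linarith) le_rfl
    have hptlow : ∀ s ∈ Ioo (t/2) t,
        t ^ (-α) * ((2:ℝ) ^ (-|β|) * L t ^ (-β)) ≤ s ^ (-α) * L s ^ (-β) := by
      intro s hs
      obtain ⟨hs1, hs2⟩ := hs
      have hs0 : 0 < s := lt_trans hhalf0 hs1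
      have hLspos : 0 < L s := lt_of_lt_of_le one_pos (hL1 s hs0 (le_trans hs2.le hta))
      have h1 : t ^ (-α) ≤ s ^ (-α) :=
        Real.rpow_le_rpow_of_nonpos hs0 hs2.le (by linarith)
      have hLsu : L s = L t + Real.log (t / s) := hLadd s t hs0 ht0
      have hu0 : 0 ≤ Real.log (t / s) := Real.log_nonneg (by rw [le_div_iff₀ hs0]; linarith)
      have hu2 : Real.log (t / s) ≤ 1 := by
        have : t / s ≤ 2 := by rw [div_le_iff₀ hs0]; linarith
        calc Real.log (t / s) ≤ Real.log 2 := Real.log_le_log (by positivity) this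
          _ ≤ 1 := by
            rw [← Real.log_exp 1]
            exact Real.log_le_log two_pos (by linarith [Real.exp_one_gt_d9])
      have hLs_le : L s ≤ 2 * L t := by rw [hLsu]; linarith
      have hLs_ge : L t ≤ L s := by rw [hLsu]; linarith
      have h2 : (2:ℝ) ^ (-|β|) * L t ^ (-β) ≤ L s ^ (-β) := by
        have e1 : L s ^ (-β) = L t ^ (-β) * (L s / L t) ^ (-β) := by
          rw [Real.div_rpow hLspos.le hLtpos.le, mul_div_cancel₀ _ hLtb.ne']
        have hr1 : 1 ≤ L s / L t := by rw [le_div_iff₀ hLtpos, one_mul]; exact hLs_ge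
        have hr2 : L s / L t ≤ 2 := by rw [div_le_iff₀ hLtpos]; linarith
        have c1 : (2:ℝ) ^ (-|β|) ≤ (L s / L t) ^ (-|β|) :=
          Real.rpow_le_rpow_of_nonpos (by linarith) hr2 (neg_nonpos.mpr (abs_nonneg β))
        have c2 : (L s / L t) ^ (-|β|) ≤ (L s / L t) ^ (-β) :=
          Real.rpow_le_rpow_of_exponent_le hr1 (neg_le_neg (le_abs_self β))
        rw [e1, mul_comm (L t ^ (-β))]
        exact mul_le_mul_of_nonneg_right (le_trans c1 c2) hLtb.le
      calc t ^ (-α) * ((2:ℝ) ^ (-|β|) * L t ^ (-β))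
          ≤ s ^ (-α) * ((2:ℝ) ^ (-|β|) * L t ^ (-β)) := by
            apply mul_le_mul_of_nonneg_right h1 (by positivity)
        _ ≤ s ^ (-α) * L s ^ (-β) :=
            mul_le_mul_of_nonneg_left h2 (Real.rpow_pos_of_pos hs0 _).le
    have step_a : ∫ s in Ioo (t/2) t, s ^ (-α) * L s ^ (-β) ≤
        ∫ s in Ioo (0:ℝ) t, s ^ (-α) * L s ^ (-β) := by
      apply setIntegral_mono_set hgint
      · rw [Filter.EventuallyLE, ae_restrict_iff' measurableSet_Ioo]
        filter_upwards with s hs using hgnn s hs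
      · exact HasSubset.Subset.eventuallyLE hsub
    have step_b : (t ^ (-α) * ((2:ℝ) ^ (-|β|) * L t ^ (-β))) * (volume (Ioo (t/2) t)).toReal
        ≤ ∫ s in Ioo (t/2) t, s ^ (-α) * L s ^ (-β) := by
      apply setIntegral_ge_of_const_le_real measurableSet_Ioo
      · rw [Real.volume_Ioo]; exact ENNReal.ofReal_ne_top
      · exact hptlow
      · exact hgint.mono_set hsub
    have hvol : (volume (Ioo (t/2) t)).toReal = t / 2 := by
      rw [Real.volume_Ioo, ENNReal.toReal_ofReal (by linarith)]
      ring
    rw [hvol] at step_b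
    refine le_trans (le_of_eq ?_) (le_trans step_b step_a)
    have ht1α : t ^ (1 - α) = t * t ^ (-α) := by
      rw [show (1 - α : ℝ) = 1 + (-α) by ring, Real.rpow_add ht0, Real.rpow_one]
    rw [ht1α]; ring
  · -- UPPER BOUND
    have step_c : ∫ s in Ioo (0:ℝ) t, s ^ (-α) * L s ^ (-β) ≤
        ∫ s in Ioo (0:ℝ) t, (K * L t ^ (-β) * t ^ ε) * s ^ (-(α + ε)) :=
      setIntegral_mono_on hgint hdomC measurableSet_Ioo hupper
    have hIc : ∫ s in Ioo (0:ℝ) t, s ^ (-(α + ε)) = t ^ ε / ε := by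
      rw [← integral_Ioc_eq_integral_Ioo, ← intervalIntegral.integral_of_le ht0.le]
      rw [integral_rpow (Or.inl hαε1)]
      rw [Real.zero_rpow (by simp only [hεdef]; intro h; nlinarith)]
      have he : -(α + ε) + 1 = ε := by simp only [hεdef]; ring
      rw [he, sub_zero]
    have step_d : ∫ s in Ioo (0:ℝ) t, (K * L t ^ (-β) * t ^ ε) * s ^ (-(α + ε)) =
        (K / ε) * (t ^ (1 - α) * L t ^ (-β)) := by
      rw [integral_const_mul, hIc]
      have htt : t ^ ε * t ^ ε = t ^ (1 - α) := by
        rw [← Real.rpow_add ht0]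
        congr 1
        simp only [hεdef]; ring
      rw [show K * L t ^ (-β) * t ^ ε * (t ^ ε / ε) =
        K * L t ^ (-β) * (t ^ ε * t ^ ε) / ε by ring, htt]
      ring
    rw [step_d] at step_c
    exact step_c
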